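/- Let G_n be the sequence of mixing measures with N*+1 atoms obtained from G* by splitting its first atom: exp(c₁ⁿ) = exp(c₂ⁿ) = ½exp(c*₁) + 1/(2n^{r+1}), A₁ⁿ = A₂ⁿ = A*₁, b₁ⁿ = b₂ⁿ = b*₁, β₁₁ⁿ = β₁₂ⁿ = β*₁₁, β₀₁ⁿ = β*₀₁ + 1/n, β₀₂ⁿ = β*₀₁ − 1/n, and whose remaining atoms coincide with the remaining atoms of G*. Then (i) L_{2,r}(G_n, G*) = 1/n^{r+1} + (exp(c*₁) + 1/n^{r+1})·(1/n^r), so L_{2,r}(G_n, G*) = Θ(n^{−r}); (ii) the mixture difference satisfies the pointwise bound |f_{G_n}(x) − f_{G*}(x)| ≤ C·n^{−(r+1)} uniformly over the bounded support of μ for some constant C; consequently ‖f_{G_n} − f_{G*}‖_{L²(μ)} / L_{2,r}(G_n, G*) → 0 as n → ∞. -/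

import Mathlib

open MeasureTheory ProbabilityTheory Filter Finset

noncomputable section

/-- Quadratic form `xᵀ A x`. -/
def qform {d : ℕ} (A : Fin d → Fin d → ℝ) (x : Fin d → ℝ) : ℝ :=
  ∑ u, ∑ v, A u v * x u * x v

/-- Dot product `bᵀ x`. -/
def dotp {d : ℕ} (b x : Fin d → ℝ) : ℝ := ∑ u, b u * x u

/-- A mixing measure with `k` atoms for the quadratic polynomial gating MoE
with linear experts (weights are `exp (c i)`). -/
structure LinMix (d k : ℕ) where
  A : Fin k → Fin d → Fin d → ℝ
  b : Fin k → Fin d → ℝ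
  c : Fin k → ℝ
  β1 : Fin k → Fin d → ℝ
  β0 : Fin k → ℝ

/-- The quadratic-polynomial-gated mixture of linear experts `f_G`. -/
def linMoE {d k : ℕ} (G : LinMix d k) (x : Fin d → ℝ) : ℝ :=
  ∑ i, (Real.exp (qform (G.A i) x + dotp (G.b i) x + G.c i) /
      ∑ j, Real.exp (qform (G.A j) x + dotp (G.b j) x + G.c j)) *
    (dotp (G.β1 i) x + G.β0 i)

/-- All parameters of the mixing measure lie in `Θ`. -/
def inClassL {d k : ℕ}
    (Θ : Set ((Fin d → Fin d → ℝ) × (Fin d → ℝ) × ℝ × (Fin d → ℝ) × ℝ))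
    (G : LinMix d k) : Prop :=
  ∀ i, (G.A i, G.b i, G.c i, G.β1 i, G.β0 i) ∈ Θ

/-- Atom (without weight) of a linear-expert mixing measure. -/
def ωl {d k : ℕ} (G : LinMix d k) (i : Fin k) :
    (Fin d → Fin d → ℝ) × (Fin d → ℝ) × (Fin d → ℝ) × ℝ :=
  (G.A i, G.b i, G.β1 i, G.β0 i)

/-- The discrete measure `Σ_i exp(c_i) δ_{(A_i,b_i,β₁ᵢ,β₀ᵢ)}` induced by a
mixing measure on the parameter space. -/
def linMeas {d k : ℕ} (G : LinMix d k) :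
    Measure ((Fin d → Fin d → ℝ) × (Fin d → ℝ) × (Fin d → ℝ) × ℝ) :=
  ∑ i, (ENNReal.ofReal (Real.exp (G.c i))) • Measure.dirac (ωl G i)

open scoped Classical in
/-- Voronoi cell `V_j(G')` of the `j`-th atom of `G` among the atoms of `G'`. -/
def vcellL {d k ks : ℕ} (G' : LinMix d k) (G : LinMix d ks) (j : Fin ks) :
    Finset (Fin k) :=
  Finset.univ.filter fun i => ∀ ℓ, ℓ ≠ j → ‖ωl G' i - ωl G j‖ ≤ ‖ωl G' i - ωl G ℓ‖

/-- The Voronoi loss `L_{2,r}(G', G)`. -/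
def lossL2r {d k ks : ℕ} (r : ℝ) (G' : LinMix d k) (G : LinMix d ks) : ℝ :=
  (∑ j, ∑ i ∈ vcellL G' G j, Real.exp (G'.c i) *
      (‖G'.A i - G.A j‖ ^ r + ‖G'.b i - G.b j‖ ^ r
        + ‖G'.β1 i - G.β1 j‖ ^ r + |G'.β0 i - G.β0 j| ^ r))
  + ∑ j, |∑ i ∈ vcellL G' G j, Real.exp (G'.c i) - Real.exp (G.c j)|

/-- `L²(μ)` distance between two functions. -/
def l2dist {d : ℕ} (μ : Measure (Fin d → ℝ)) (f g : (Fin d → ℝ) → ℝ) : ℝ :=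
  Real.sqrt (∫ x, (f x - g x) ^ 2 ∂μ)

lemma loss_formula {d Ns : ℕ} (Gstar : LinMix d (Ns + 1))
    (hdistinct : Function.Injective (ωl Gstar))
    (r : ℝ) (hr : 1 ≤ r) (G : LinMix d (Ns + 2)) (n : ℕ) (hn : 1 ≤ n)
    (hδ : ∀ ℓ : Fin (Ns + 1), ℓ ≠ 0 → 2 / (n : ℝ) < ‖ωl Gstar 0 - ωl Gstar ℓ‖)
    (hc0 : Real.exp (G.c 0) = Real.exp (Gstar.c 0) / 2 + 1 / (2 * (n : ℝ) ^ (r + 1)))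
    (hc1 : Real.exp (G.c 1) = Real.exp (Gstar.c 0) / 2 + 1 / (2 * (n : ℝ) ^ (r + 1)))
    (hA0 : G.A 0 = Gstar.A 0) (hA1 : G.A 1 = Gstar.A 0)
    (hb0 : G.b 0 = Gstar.b 0) (hb1 : G.b 1 = Gstar.b 0)
    (hβ10 : G.β1 0 = Gstar.β1 0) (hβ11 : G.β1 1 = Gstar.β1 0)
    (hβ00 : G.β0 0 = Gstar.β0 0 + 1 / (n : ℝ))
    (hβ01 : G.β0 1 = Gstar.β0 0 - 1 / (n : ℝ))
    (hrest : ∀ i : Fin (Ns + 2), 2 ≤ (i : ℕ) →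
        G.c i = Gstar.c ⟨(i : ℕ) - 1, by have := i.isLt; omega⟩ ∧
        G.A i = Gstar.A ⟨(i : ℕ) - 1, by have := i.isLt; omega⟩ ∧
        G.b i = Gstar.b ⟨(i : ℕ) - 1, by have := i.isLt; omega⟩ ∧
        G.β1 i = Gstar.β1 ⟨(i : ℕ) - 1, by have := i.isLt; omega⟩ ∧
        G.β0 i = Gstar.β0 ⟨(i : ℕ) - 1, by have := i.isLt; omega⟩) :
    lossL2r r G Gstar =
      1 / (n : ℝ) ^ (r + 1) +
        (Real.exp (Gstar.c 0) + 1 / (n : ℝ) ^ (r + 1)) * (1 / (n : ℝ) ^ r) := by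
  have hnpos : (0:ℝ) < (n:ℝ) := by exact_mod_cast hn
  have hinv : (0:ℝ) ≤ 1 / (n:ℝ) := by positivity
  -- ω of the high atoms agrees with Gstar
  have hωhi : ∀ i : Fin (Ns + 2), 2 ≤ (i : ℕ) →
      ωl G i = ωl Gstar ⟨(i : ℕ) - 1, by have := i.isLt; omega⟩ := by
    intro i hi
    obtain ⟨h1, h2, h3, h4, h5⟩ := hrest i hi
    simp [ωl, h2, h3, h4, h5]
  -- norms of perturbed atoms
  have hnorm0 : ‖ωl G 0 - ωl Gstar 0‖ = 1 / (n:ℝ) := by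
    have hω0 : ωl G 0 - ωl Gstar 0 = (0, 0, 0, 1 / (n:ℝ)) := by
      simp [ωl, hA0, hb0, hβ10, hβ00, Prod.ext_iff, sub_eq_iff_eq_add]
    rw [hω0]
    simp [Prod.norm_def, Real.norm_eq_abs, abs_of_nonneg hinv]
  have hnorm1 : ‖ωl G 1 - ωl Gstar 0‖ = 1 / (n:ℝ) := by
    have hω1 : ωl G 1 - ωl Gstar 0 = (0, 0, 0, -(1 / (n:ℝ))) := by
      simp [ωl, hA1, hb1, hβ11, hβ01, Prod.ext_iff, sub_eq_iff_eq_add]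
    rw [hω1]
    simp [Prod.norm_def, Real.norm_eq_abs, abs_of_nonneg hinv]
  -- two atoms near atom 0 are far from the others
  have hfar : ∀ i : Fin (Ns + 2), ‖ωl G i - ωl Gstar 0‖ = 1 / (n:ℝ) →
      ∀ ℓ : Fin (Ns + 1), ℓ ≠ 0 → 1 / (n:ℝ) < ‖ωl G i - ωl Gstar ℓ‖ := by
    intro i hi ℓ hℓ
    have h1 := hδ ℓ hℓ
    have htri : ‖ωl Gstar 0 - ωl Gstar ℓ‖ ≤ ‖ωl Gstar 0 - ωl G i‖ + ‖ωl G i - ωl Gstar ℓ‖ := by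
      simpa [dist_eq_norm] using dist_triangle (ωl Gstar 0) (ωl G i) (ωl Gstar ℓ)
    have h2 : ‖ωl Gstar 0 - ωl G i‖ = 1 / (n:ℝ) := by rw [norm_sub_rev]; exact hi
    have h3 : 2 / (n:ℝ) = 1 / (n:ℝ) + 1 / (n:ℝ) := by ring
    linarith
  -- Voronoi cells
  have hcell0 : vcellL G Gstar 0 = {0, 1} := by
    ext i
    simp only [vcellL, Finset.mem_filter, Finset.mem_univ, true_and, Finset.mem_insert,
      Finset.mem_singleton]
    constructor
    · intro h
      by_contra hne
      push_neg at hne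
      have hi2 : 2 ≤ (i : ℕ) := by
        have h0 : (i : ℕ) ≠ 0 := by
          intro hv; exact hne.1 (Fin.ext (by simp [hv]))
        have h1 : (i : ℕ) ≠ 1 := by
          intro hv; exact hne.2 (Fin.ext (by simp [hv]))
        omega
      set j : Fin (Ns + 1) := ⟨(i : ℕ) - 1, by have := i.isLt; omega⟩ with hj
      have hjne : j ≠ 0 := by
        intro hv
        have hv' := congrArg Fin.val hv
        simp only [hj, Fin.val_zero] at hv'
        omega
      have := h j hjne
      rw [hωhi i hi2] at this
      simp only [← hj, sub_self, norm_zero] at this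
      have hpos : (0:ℝ) < ‖ωl Gstar j - ωl Gstar 0‖ := by
        have := hδ j hjne
        rw [norm_sub_rev]
        have h2n : (0:ℝ) < 2 / (n:ℝ) := by positivity
        linarith
      linarith
    · intro h ℓ hℓ
      rcases h with h | h <;> subst h
      · rw [hnorm0]; exact (hfar 0 hnorm0 ℓ hℓ).le
      · rw [hnorm1]; exact (hfar 1 hnorm1 ℓ hℓ).le
  have hcellj : ∀ j : Fin Ns, vcellL G Gstar j.succ = {j.succ.succ} := by
    intro j
    have hj2 : 2 ≤ (j.succ.succ : ℕ) := by simp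
    have hidx : (⟨((j.succ.succ : Fin (Ns+2)) : ℕ) - 1, by have := (j.succ.succ : Fin (Ns+2)).isLt; omega⟩ : Fin (Ns+1)) = j.succ := by
      apply Fin.ext; simp
    ext i
    simp only [vcellL, Finset.mem_filter, Finset.mem_univ, true_and, Finset.mem_singleton]
    constructor
    · intro h
      by_contra hne
      by_cases hi2 : 2 ≤ (i : ℕ)
      · -- exact atom of Gstar, at position i-1 ≠ j.succ
        set ℓ : Fin (Ns + 1) := ⟨(i : ℕ) - 1, by have := i.isLt; omega⟩ with hℓ
        have hℓne : ℓ ≠ j.succ := by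
          intro hv
          apply hne
          apply Fin.ext
          have hv' := congrArg Fin.val hv
          simp only [hℓ, Fin.val_succ] at hv'
          simp only [Fin.val_succ]
          omega
        have := h ℓ hℓne
        rw [hωhi i hi2] at this
        simp only [← hℓ, sub_self, norm_zero] at this
        have heq : ωl Gstar ℓ = ωl Gstar j.succ := by
          have h0 : ‖ωl Gstar ℓ - ωl Gstar j.succ‖ = 0 := le_antisymm this (norm_nonneg _)
          have := sub_eq_zero.mp (norm_eq_zero.mp h0)
          exact this
        exact hℓne (hdistinct heq)
      · -- i = 0 or 1, too far
        have hi01 : ‖ωl G i - ωl Gstar 0‖ = 1 / (n:ℝ) := by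
          have : i = 0 ∨ i = 1 := by
            have := i.isLt
            rcases Nat.lt_or_ge (i : ℕ) 1 with h' | h'
            · left; exact Fin.ext (by simpa using Nat.lt_one_iff.mp h')
            · right; exact Fin.ext (by simp; omega)
          rcases this with h' | h' <;> subst h'
          · exact hnorm0
          · exact hnorm1
        have hne0 : (0 : Fin (Ns+1)) ≠ j.succ := (Fin.succ_ne_zero j).symm
        have hle := h 0 hne0
        rw [hi01] at hle
        have := hfar i hi01 j.succ (Fin.succ_ne_zero j)
        -- h requires ‖ωl G i - ωl Gstar j.succ‖ ≤ ‖ωl G i - ωl Gstar 0‖ = 1/n, contradiction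
        have hle2 := h  -- membership in cell j.succ
        linarith
    · intro h
      subst h
      intro ℓ hℓ
      rw [hωhi _ hj2, hidx]
      simp [norm_nonneg]
  -- component equalities on high atoms
  have hc' : ∀ j : Fin Ns, G.c j.succ.succ = Gstar.c j.succ := by
    intro j
    have h2 : 2 ≤ ((j.succ.succ : Fin (Ns+2)) : ℕ) := by simp
    have hidx : (⟨((j.succ.succ : Fin (Ns+2)) : ℕ) - 1,
        by have := (j.succ.succ : Fin (Ns+2)).isLt; omega⟩ : Fin (Ns+1)) = j.succ := by
      apply Fin.ext; simp
    rw [(hrest _ h2).1, hidx]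
  have hω' : ∀ j : Fin Ns, ωl G j.succ.succ = ωl Gstar j.succ := by
    intro j
    have h2 : 2 ≤ ((j.succ.succ : Fin (Ns+2)) : ℕ) := by simp
    have hidx : (⟨((j.succ.succ : Fin (Ns+2)) : ℕ) - 1,
        by have := (j.succ.succ : Fin (Ns+2)).isLt; omega⟩ : Fin (Ns+1)) = j.succ := by
      apply Fin.ext; simp
    rw [hωhi _ h2, hidx]
  have hA' : ∀ j : Fin Ns, G.A j.succ.succ = Gstar.A j.succ := fun j => congrArg Prod.fst (hω' j)
  have hb' : ∀ j : Fin Ns, G.b j.succ.succ = Gstar.b j.succ := fun j => congrArg (fun p => p.2.1) (hω' j)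
  have hβ1' : ∀ j : Fin Ns, G.β1 j.succ.succ = Gstar.β1 j.succ := fun j => congrArg (fun p => p.2.2.1) (hω' j)
  have hβ0' : ∀ j : Fin Ns, G.β0 j.succ.succ = Gstar.β0 j.succ := fun j => congrArg (fun p => p.2.2.2) (hω' j)
  have h01 : (0 : Fin (Ns+2)) ≠ 1 := by
    intro hv; have := congrArg Fin.val hv; simp at this
  have hr0 : r ≠ 0 := by intro h; rw [h] at hr; linarith
  have hX : (0:ℝ) < (n:ℝ) ^ (r+1) := Real.rpow_pos_of_pos hnpos _
  have e1 : G.β0 0 - Gstar.β0 0 = 1/(n:ℝ) := by rw [hβ00]; ring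
  have e2 : G.β0 1 - Gstar.β0 0 = -(1/(n:ℝ)) := by rw [hβ01]; ring
  have hpow : (1/(n:ℝ)) ^ r = 1/(n:ℝ) ^ r := by
    rw [one_div, one_div, Real.inv_rpow hnpos.le]
  rw [lossL2r]
  simp only [Fin.sum_univ_succ, hcell0, hcellj, Finset.sum_pair h01, Finset.sum_singleton,
    hA0, hA1, hb0, hb1, hβ10, hβ11, e1, e2, hc', hA', hb', hβ1', hβ0', sub_self, norm_zero,
    abs_zero, abs_neg, abs_of_nonneg hinv, Real.zero_rpow hr0, add_zero, zero_add, mul_zero,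
    Finset.sum_const_zero, hpow, hc0, hc1]
  have habs : Real.exp (Gstar.c 0) / 2 + 1 / (2 * (n:ℝ) ^ (r+1)) +
      (Real.exp (Gstar.c 0) / 2 + 1 / (2 * (n:ℝ) ^ (r+1))) - Real.exp (Gstar.c 0)
      = 1 / (n:ℝ) ^ (r+1) := by
    field_simp
    ring
  rw [habs, abs_of_nonneg (by positivity : (0:ℝ) ≤ 1 / (n:ℝ) ^ (r+1))]
  ring
set_option maxHeartbeats 1000000 in
lemma pointwise_bound {d Ns : ℕ} (Gstar : LinMix d (Ns + 1))
    (r : ℝ) (hr : 1 ≤ r) (G : LinMix d (Ns + 2)) (n : ℕ) (hn : 1 ≤ n)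
    (B : ℝ)
    (hc0 : Real.exp (G.c 0) = Real.exp (Gstar.c 0) / 2 + 1 / (2 * (n : ℝ) ^ (r + 1)))
    (hc1 : Real.exp (G.c 1) = Real.exp (Gstar.c 0) / 2 + 1 / (2 * (n : ℝ) ^ (r + 1)))
    (hA0 : G.A 0 = Gstar.A 0) (hA1 : G.A 1 = Gstar.A 0)
    (hb0 : G.b 0 = Gstar.b 0) (hb1 : G.b 1 = Gstar.b 0)
    (hβ10 : G.β1 0 = Gstar.β1 0) (hβ11 : G.β1 1 = Gstar.β1 0)
    (hβ00 : G.β0 0 = Gstar.β0 0 + 1 / (n : ℝ))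
    (hβ01 : G.β0 1 = Gstar.β0 0 - 1 / (n : ℝ))
    (hrest : ∀ i : Fin (Ns + 2), 2 ≤ (i : ℕ) →
        G.c i = Gstar.c ⟨(i : ℕ) - 1, by have := i.isLt; omega⟩ ∧
        G.A i = Gstar.A ⟨(i : ℕ) - 1, by have := i.isLt; omega⟩ ∧
        G.b i = Gstar.b ⟨(i : ℕ) - 1, by have := i.isLt; omega⟩ ∧
        G.β1 i = Gstar.β1 ⟨(i : ℕ) - 1, by have := i.isLt; omega⟩ ∧
        G.β0 i = Gstar.β0 ⟨(i : ℕ) - 1, by have := i.isLt; omega⟩)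
    (x : Fin d → ℝ) (hx : ‖x‖ ≤ B) :
    |linMoE G x - linMoE Gstar x| ≤
      ((∑ j : Fin (Ns + 1), ((∑ u, |Gstar.β1 0 u - Gstar.β1 j u|) * |B|
          + |Gstar.β0 0 - Gstar.β0 j|)) + 1)
        * Real.exp (-(Gstar.c 0)) * (n : ℝ) ^ (-(r + 1)) := by
  have hnpos : (0:ℝ) < (n:ℝ) := by exact_mod_cast hn
  set M : ℝ := ∑ j : Fin (Ns + 1), ((∑ u, |Gstar.β1 0 u - Gstar.β1 j u|) * |B|
      + |Gstar.β0 0 - Gstar.β0 j|) with hM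
  set ε : ℝ := 1 / (n : ℝ) ^ (r + 1) with hε
  have hεpos : 0 < ε := by positivity
  set g : Fin (Ns + 1) → ℝ := fun j => Real.exp (qform (Gstar.A j) x + dotp (Gstar.b j) x) with hg
  set E : Fin (Ns + 1) → ℝ := fun j => g j * Real.exp (Gstar.c j) with hE
  set h : Fin (Ns + 1) → ℝ := fun j => dotp (Gstar.β1 j) x + Gstar.β0 j with hh
  set S : ℝ := ∑ j, E j with hS
  set Num : ℝ := ∑ j, E j * h j with hNum
  have hgpos : ∀ j, 0 < g j := fun j => Real.exp_pos _
  have hEpos : ∀ j, 0 < E j := fun j => mul_pos (hgpos j) (Real.exp_pos _)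
  have hSpos : 0 < S := Finset.sum_pos (fun j _ => hEpos j) Finset.univ_nonempty
  have hgate : ∀ j, Real.exp (qform (Gstar.A j) x + dotp (Gstar.b j) x + Gstar.c j) = E j :=
    fun j => Real.exp_add _ _
  have hfstar : linMoE Gstar x = Num / S := by
    rw [linMoE]
    simp only [hgate, div_mul_eq_mul_div]
    rw [← Finset.sum_div]
  -- component equalities on high atoms
  have hhi : ∀ j : Fin Ns, G.c j.succ.succ = Gstar.c j.succ ∧ G.A j.succ.succ = Gstar.A j.succ
      ∧ G.b j.succ.succ = Gstar.b j.succ ∧ G.β1 j.succ.succ = Gstar.β1 j.succ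
      ∧ G.β0 j.succ.succ = Gstar.β0 j.succ := by
    intro j
    have h2 : 2 ≤ ((j.succ.succ : Fin (Ns+2)) : ℕ) := by simp
    have hidx : (⟨((j.succ.succ : Fin (Ns+2)) : ℕ) - 1,
        by have := (j.succ.succ : Fin (Ns+2)).isLt; omega⟩ : Fin (Ns+1)) = j.succ := by
      apply Fin.ext; simp
    obtain ⟨k1, k2, k3, k4, k5⟩ := hrest _ h2
    rw [hidx] at k1 k2 k3 k4 k5
    exact ⟨k1, k2, k3, k4, k5⟩
  -- gates of G
  have hone : (Fin.succ 0 : Fin (Ns+2)) = 1 := by apply Fin.ext; simp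
  have hgateG : ∀ i : Fin (Ns + 2),
      Real.exp (qform (G.A i) x + dotp (G.b i) x + G.c i)
        = Real.exp (qform (G.A i) x + dotp (G.b i) x) * Real.exp (G.c i) :=
    fun i => Real.exp_add _ _
  have hT : (∑ i : Fin (Ns + 2), Real.exp (qform (G.A i) x + dotp (G.b i) x + G.c i))
      = S + ε * g 0 := by
    simp only [hgateG]
    rw [Fin.sum_univ_succ, Fin.sum_univ_succ]
    have hterm : ∀ j : Fin Ns,
        Real.exp (qform (G.A j.succ.succ) x + dotp (G.b j.succ.succ) x) * Real.exp (G.c j.succ.succ)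
          = E j.succ := by
      intro j
      obtain ⟨k1, k2, k3, k4, k5⟩ := hhi j
      rw [k1, k2, k3]
    simp only [hterm, hone, hA0, hA1, hb0, hb1, hc0, hc1]
    rw [hS, Fin.sum_univ_succ]
    simp only [hE]
    push_cast
    ring
  have hNumG : (∑ i : Fin (Ns + 2), Real.exp (qform (G.A i) x + dotp (G.b i) x + G.c i)
        * (dotp (G.β1 i) x + G.β0 i))
      = Num + ε * g 0 * h 0 := by
    simp only [hgateG]
    rw [Fin.sum_univ_succ, Fin.sum_univ_succ]
    have hterm : ∀ j : Fin Ns,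
        Real.exp (qform (G.A j.succ.succ) x + dotp (G.b j.succ.succ) x) * Real.exp (G.c j.succ.succ)
          * (dotp (G.β1 j.succ.succ) x + G.β0 j.succ.succ) = E j.succ * h j.succ := by
      intro j
      obtain ⟨k1, k2, k3, k4, k5⟩ := hhi j
      rw [k1, k2, k3, k4, k5]
    simp only [hterm, hone, hA0, hA1, hb0, hb1, hc0, hc1, hβ10, hβ11, hβ00, hβ01]
    rw [hNum, Fin.sum_univ_succ]
    simp only [hE, hh]
    ring
  have hfG : linMoE G x = (Num + ε * g 0 * h 0) / (S + ε * g 0) := by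
    rw [linMoE]
    simp only [div_mul_eq_mul_div]
    rw [← Finset.sum_div, hT, hNumG]
  have hTpos : 0 < S + ε * g 0 := by positivity
  have hdiff : linMoE G x - linMoE Gstar x
      = ε * g 0 * (h 0 * S - Num) / (S * (S + ε * g 0)) := by
    rw [hfG, hfstar]
    field_simp
    ring
  -- bound |h 0 * S - Num|
  have hMterm : ∀ j : Fin (Ns + 1), |h 0 - h j| ≤ M := by
    intro j
    have h1 : |h 0 - h j| ≤ (∑ u, |Gstar.β1 0 u - Gstar.β1 j u|) * |B|
        + |Gstar.β0 0 - Gstar.β0 j| := by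
      have hB0 : (0:ℝ) ≤ B := le_trans (norm_nonneg x) hx
      have hxu : ∀ u, |x u| ≤ |B| := by
        intro u
        calc |x u| ≤ ‖x‖ := by
              simpa [Real.norm_eq_abs] using norm_le_pi_norm x u
          _ ≤ B := hx
          _ ≤ |B| := le_abs_self B
      have hsum : (∑ u, (Gstar.β1 0 u - Gstar.β1 j u) * x u)
          = (∑ u, Gstar.β1 0 u * x u) - ∑ u, Gstar.β1 j u * x u := by
        rw [← Finset.sum_sub_distrib]
        exact Finset.sum_congr rfl fun u _ => by ring
      have : h 0 - h j = (∑ u, (Gstar.β1 0 u - Gstar.β1 j u) * x u)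
          + (Gstar.β0 0 - Gstar.β0 j) := by
        simp only [hh, dotp]
        rw [hsum]
        ring
      rw [this]
      calc |(∑ u, (Gstar.β1 0 u - Gstar.β1 j u) * x u) + (Gstar.β0 0 - Gstar.β0 j)|
          ≤ |∑ u, (Gstar.β1 0 u - Gstar.β1 j u) * x u| + |Gstar.β0 0 - Gstar.β0 j| :=
            abs_add_le _ _
        _ ≤ (∑ u, |Gstar.β1 0 u - Gstar.β1 j u| * |B|) + |Gstar.β0 0 - Gstar.β0 j| := by
            gcongr
            calc |∑ u, (Gstar.β1 0 u - Gstar.β1 j u) * x u|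
                ≤ ∑ u, |(Gstar.β1 0 u - Gstar.β1 j u) * x u| := Finset.abs_sum_le_sum_abs _ _
              _ ≤ ∑ u, |Gstar.β1 0 u - Gstar.β1 j u| * |B| := by
                  apply Finset.sum_le_sum
                  intro u _
                  rw [abs_mul]
                  exact mul_le_mul_of_nonneg_left (hxu u) (abs_nonneg _)
        _ = (∑ u, |Gstar.β1 0 u - Gstar.β1 j u|) * |B| + |Gstar.β0 0 - Gstar.β0 j| := by
            rw [Finset.sum_mul]
    refine h1.trans ?_
    rw [hM]
    apply Finset.single_le_sum (f := fun j => (∑ u, |Gstar.β1 0 u - Gstar.β1 j u|) * |B|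
        + |Gstar.β0 0 - Gstar.β0 j|) (fun j _ => by positivity) (Finset.mem_univ j)
  have hMnonneg : 0 ≤ M := by
    rw [hM]; apply Finset.sum_nonneg; intro j _; positivity
  have hX : |h 0 * S - Num| ≤ S * M := by
    have : h 0 * S - Num = ∑ j, E j * (h 0 - h j) := by
      rw [hS, hNum, Finset.mul_sum, ← Finset.sum_sub_distrib]
      apply Finset.sum_congr rfl
      intro j _
      ring
    rw [this]
    calc |∑ j, E j * (h 0 - h j)| ≤ ∑ j, |E j * (h 0 - h j)| := Finset.abs_sum_le_sum_abs _ _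
      _ ≤ ∑ j, E j * M := by
          apply Finset.sum_le_sum
          intro j _
          rw [abs_mul, abs_of_pos (hEpos j)]
          exact mul_le_mul_of_nonneg_left (hMterm j) (hEpos j).le
      _ = S * M := by rw [hS, Finset.sum_mul]
  -- final bound
  have hSlow : g 0 * Real.exp (Gstar.c 0) ≤ S := by
    rw [hS]
    exact Finset.single_le_sum (f := E) (fun j _ => (hEpos j).le) (Finset.mem_univ 0)
  have hrpow : (n : ℝ) ^ (-(r + 1)) = ε := by
    rw [hε, Real.rpow_neg hnpos.le, one_div]
  rw [hdiff, hrpow]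
  rw [abs_div, abs_of_pos (by positivity : (0:ℝ) < S * (S + ε * g 0))]
  rw [div_le_iff₀ (by positivity : (0:ℝ) < S * (S + ε * g 0))]
  have hexp : Real.exp (-(Gstar.c 0)) * Real.exp (Gstar.c 0) = 1 := by
    rw [← Real.exp_add]; simp
  have habs2 : |ε * g 0 * (h 0 * S - Num)| = ε * g 0 * |h 0 * S - Num| := by
    rw [abs_mul, abs_of_pos (by positivity : (0:ℝ) < ε * g 0)]
  rw [habs2]
  have step1 : ε * g 0 * |h 0 * S - Num| ≤ ε * g 0 * (S * M) := by
    exact mul_le_mul_of_nonneg_left hX (by positivity)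
  refine step1.trans ?_
  have hg0 : g 0 ≤ S * Real.exp (-(Gstar.c 0)) := by
    calc g 0 = g 0 * Real.exp (Gstar.c 0) * Real.exp (-(Gstar.c 0)) := by
          rw [mul_assoc, ← Real.exp_add]; simp
      _ ≤ S * Real.exp (-(Gstar.c 0)) :=
          mul_le_mul_of_nonneg_right hSlow (Real.exp_pos _).le
  have hkey : ε * S * M * g 0 ≤ ε * S * M * (S * Real.exp (-(Gstar.c 0))) :=
    mul_le_mul_of_nonneg_left hg0 (by positivity)
  nlinarith [hkey, hεpos, hSpos, hMnonneg, hgpos 0, Real.exp_pos (-(Gstar.c 0)),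
    mul_nonneg (mul_nonneg (mul_nonneg (Real.exp_pos (-(Gstar.c 0))).le hεpos.le) hεpos.le)
      (mul_nonneg (hgpos 0).le hSpos.le),
    mul_nonneg (mul_nonneg (Real.exp_pos (-(Gstar.c 0))).le hεpos.le)
      (mul_nonneg hSpos.le hSpos.le)]
theorem splitting_sequence_ratio_vanishes
    {d Ns : ℕ}
    (μ : Measure (Fin d → ℝ)) [IsProbabilityMeasure μ] (B : ℝ)
    (hsupp : ∀ᵐ x ∂μ, ‖x‖ ≤ B)
    (Gstar : LinMix d (Ns + 1))
    (hdistinct : Function.Injective (ωl Gstar))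
    (r : ℝ) (hr : 1 ≤ r)
    (Gn : ℕ → LinMix d (Ns + 2))
    (hGn : ∀ n : ℕ, 1 ≤ n →
      (Real.exp ((Gn n).c 0) = Real.exp (Gstar.c 0) / 2 + 1 / (2 * (n : ℝ) ^ (r + 1))) ∧
      (Real.exp ((Gn n).c 1) = Real.exp (Gstar.c 0) / 2 + 1 / (2 * (n : ℝ) ^ (r + 1))) ∧
      (Gn n).A 0 = Gstar.A 0 ∧ (Gn n).A 1 = Gstar.A 0 ∧
      (Gn n).b 0 = Gstar.b 0 ∧ (Gn n).b 1 = Gstar.b 0 ∧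
      (Gn n).β1 0 = Gstar.β1 0 ∧ (Gn n).β1 1 = Gstar.β1 0 ∧
      (Gn n).β0 0 = Gstar.β0 0 + 1 / (n : ℝ) ∧
      (Gn n).β0 1 = Gstar.β0 0 - 1 / (n : ℝ) ∧
      ∀ i : Fin (Ns + 2), 2 ≤ (i : ℕ) →
        (Gn n).c i = Gstar.c ⟨(i : ℕ) - 1, by have := i.isLt; omega⟩ ∧
        (Gn n).A i = Gstar.A ⟨(i : ℕ) - 1, by have := i.isLt; omega⟩ ∧
        (Gn n).b i = Gstar.b ⟨(i : ℕ) - 1, by have := i.isLt; omega⟩ ∧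
        (Gn n).β1 i = Gstar.β1 ⟨(i : ℕ) - 1, by have := i.isLt; omega⟩ ∧
        (Gn n).β0 i = Gstar.β0 ⟨(i : ℕ) - 1, by have := i.isLt; omega⟩) :
    (∀ᶠ n : ℕ in atTop,
      lossL2r r (Gn n) Gstar =
        1 / (n : ℝ) ^ (r + 1) +
          (Real.exp (Gstar.c 0) + 1 / (n : ℝ) ^ (r + 1)) * (1 / (n : ℝ) ^ r)) ∧
    (∃ c₁ > (0 : ℝ), ∃ c₂ > (0 : ℝ), ∀ᶠ n : ℕ in atTop,
      c₁ * (n : ℝ) ^ (-r) ≤ lossL2r r (Gn n) Gstar ∧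
      lossL2r r (Gn n) Gstar ≤ c₂ * (n : ℝ) ^ (-r)) ∧
    (∃ C > (0 : ℝ), ∀ n : ℕ, 1 ≤ n → ∀ x : Fin d → ℝ, ‖x‖ ≤ B →
      |linMoE (Gn n) x - linMoE Gstar x| ≤ C * (n : ℝ) ^ (-(r + 1))) ∧
    Tendsto (fun n : ℕ =>
        l2dist μ (linMoE (Gn n)) (linMoE Gstar) / lossL2r r (Gn n) Gstar)
      atTop (nhds 0) := by
  classical
  set e0 : ℝ := Real.exp (Gstar.c 0) with he0
  have he0pos : 0 < e0 := Real.exp_pos _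
  -- eventual separation hypothesis
  have hδev : ∀ᶠ n : ℕ in atTop, ∀ ℓ : Fin (Ns + 1), ℓ ≠ 0 →
      2 / (n : ℝ) < ‖ωl Gstar 0 - ωl Gstar ℓ‖ := by
    refine eventually_all.mpr fun ℓ => ?_
    by_cases hℓ : ℓ = 0
    · filter_upwards with n h; exact absurd hℓ h
    · have hpos : 0 < ‖ωl Gstar 0 - ωl Gstar ℓ‖ := by
        rw [norm_pos_iff, sub_ne_zero]
        intro hEq
        exact hℓ (hdistinct hEq).symm
      have htend : Tendsto (fun n : ℕ => 2 / (n:ℝ)) atTop (nhds 0) :=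
        tendsto_const_div_atTop_nhds_zero_nat 2
      filter_upwards [htend.eventually (gt_mem_nhds hpos)] with n h _
      exact h
  -- Part (i)
  have hA : ∀ᶠ n : ℕ in atTop,
      lossL2r r (Gn n) Gstar =
        1 / (n : ℝ) ^ (r + 1) +
          (Real.exp (Gstar.c 0) + 1 / (n : ℝ) ^ (r + 1)) * (1 / (n : ℝ) ^ r) := by
    filter_upwards [hδev, eventually_ge_atTop 1] with n hδ hn
    obtain ⟨k1, k2, k3, k4, k5, k6, k7, k8, k9, k10, k11⟩ := hGn n hn
    exact loss_formula Gstar hdistinct r hr (Gn n) n hn hδ k1 k2 k3 k4 k5 k6 k7 k8 k9 k10 k11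
  -- Part (ii) : two-sided bound
  have hB2 : ∀ᶠ n : ℕ in atTop,
      e0 * (n : ℝ) ^ (-r) ≤ lossL2r r (Gn n) Gstar ∧
      lossL2r r (Gn n) Gstar ≤ (e0 + 2) * (n : ℝ) ^ (-r) := by
    filter_upwards [hA, eventually_ge_atTop 1] with n hform hn
    have hnpos : (0:ℝ) < (n:ℝ) := by exact_mod_cast hn
    have hn1 : (1:ℝ) ≤ (n:ℝ) := by exact_mod_cast hn
    have hX : (0:ℝ) < (n:ℝ) ^ r := Real.rpow_pos_of_pos hnpos _
    have hY : (0:ℝ) < (n:ℝ) ^ (r+1) := Real.rpow_pos_of_pos hnpos _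
    have hXY : (n:ℝ) ^ r ≤ (n:ℝ) ^ (r+1) :=
      Real.rpow_le_rpow_of_exponent_le hn1 (by linarith)
    have hY1 : (1:ℝ) ≤ (n:ℝ) ^ (r+1) := Real.one_le_rpow hn1 (by linarith)
    have hneg : (n:ℝ) ^ (-r) = 1 / (n:ℝ) ^ r := by
      rw [Real.rpow_neg hnpos.le, one_div]
    have hinvYX : 1 / (n:ℝ) ^ (r+1) ≤ 1 / (n:ℝ) ^ r := by
      apply one_div_le_one_div_of_le hX hXY
    have hinvY1 : 1 / (n:ℝ) ^ (r+1) ≤ 1 := by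
      rw [div_le_one hY]; exact hY1
    have hinvYpos : (0:ℝ) < 1 / (n:ℝ) ^ (r+1) := by positivity
    have hinvXpos : (0:ℝ) < 1 / (n:ℝ) ^ r := by positivity
    rw [hform, hneg, ← he0]
    constructor
    · nlinarith [mul_pos hinvYpos hinvXpos]
    · nlinarith [mul_le_mul_of_nonneg_right hinvY1 hinvXpos.le]
  have hB : ∃ c₁ > (0 : ℝ), ∃ c₂ > (0 : ℝ), ∀ᶠ n : ℕ in atTop,
      c₁ * (n : ℝ) ^ (-r) ≤ lossL2r r (Gn n) Gstar ∧
      lossL2r r (Gn n) Gstar ≤ c₂ * (n : ℝ) ^ (-r) :=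
    ⟨e0, he0pos, e0 + 2, by linarith, hB2⟩
  -- Part (iii) : pointwise bound
  set M : ℝ := ∑ j : Fin (Ns + 1), ((∑ u, |Gstar.β1 0 u - Gstar.β1 j u|) * |B|
      + |Gstar.β0 0 - Gstar.β0 j|) with hM
  have hMnonneg : 0 ≤ M := by
    rw [hM]; apply Finset.sum_nonneg; intro j _; positivity
  set C : ℝ := (M + 1) * Real.exp (-(Gstar.c 0)) with hC
  have hCpos : 0 < C := by
    apply mul_pos (by linarith) (Real.exp_pos _)
  have hCbound : ∀ n : ℕ, 1 ≤ n → ∀ x : Fin d → ℝ, ‖x‖ ≤ B →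
      |linMoE (Gn n) x - linMoE Gstar x| ≤ C * (n : ℝ) ^ (-(r + 1)) := by
    intro n hn x hx
    obtain ⟨k1, k2, k3, k4, k5, k6, k7, k8, k9, k10, k11⟩ := hGn n hn
    have := pointwise_bound Gstar r hr (Gn n) n hn B k1 k2 k3 k4 k5 k6 k7 k8 k9 k10 k11 x hx
    calc |linMoE (Gn n) x - linMoE Gstar x|
        ≤ (M + 1) * Real.exp (-(Gstar.c 0)) * (n : ℝ) ^ (-(r + 1)) := this
      _ = C * (n : ℝ) ^ (-(r + 1)) := by rw [hC]
  -- Part (iv)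
  have hl2 : ∀ n : ℕ, 1 ≤ n →
      l2dist μ (linMoE (Gn n)) (linMoE Gstar) ≤ C * (n : ℝ) ^ (-(r + 1)) := by
    intro n hn
    have hnpos : (0:ℝ) < (n:ℝ) := by exact_mod_cast hn
    set K : ℝ := C * (n : ℝ) ^ (-(r + 1)) with hK
    have hKpos : 0 < K := mul_pos hCpos (Real.rpow_pos_of_pos hnpos _)
    have hae : ∀ᵐ x ∂μ, (linMoE (Gn n) x - linMoE Gstar x) ^ 2 ≤ K ^ 2 := by
      filter_upwards [hsupp] with x hx
      have hb := hCbound n hn x hx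
      have : (linMoE (Gn n) x - linMoE Gstar x) ^ 2
          = |linMoE (Gn n) x - linMoE Gstar x| ^ 2 := (sq_abs _).symm
      rw [this]
      exact pow_le_pow_left₀ (abs_nonneg _) hb 2
    have hint : ∫ x, (linMoE (Gn n) x - linMoE Gstar x) ^ 2 ∂μ ≤ ∫ _x, K ^ 2 ∂μ :=
      integral_mono_of_nonneg (Filter.Eventually.of_forall fun x => sq_nonneg _)
        (integrable_const _) hae
    have hintK : ∫ _x : Fin d → ℝ, K ^ 2 ∂μ = K ^ 2 := by
      rw [integral_const, probReal_univ, one_smul]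
    rw [l2dist]
    calc Real.sqrt (∫ x, (linMoE (Gn n) x - linMoE Gstar x) ^ 2 ∂μ)
        ≤ Real.sqrt (K ^ 2) := Real.sqrt_le_sqrt (hint.trans_eq hintK)
      _ = K := Real.sqrt_sq hKpos.le
  have hratio : ∀ᶠ n : ℕ in atTop,
      l2dist μ (linMoE (Gn n)) (linMoE Gstar) / lossL2r r (Gn n) Gstar
        ≤ (C / e0) * ((n : ℝ))⁻¹ := by
    filter_upwards [hB2, eventually_ge_atTop 1] with n hb hn
    have hnpos : (0:ℝ) < (n:ℝ) := by exact_mod_cast hn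
    have hlow : 0 < e0 * (n : ℝ) ^ (-r) :=
      mul_pos he0pos (Real.rpow_pos_of_pos hnpos _)
    have h1 : l2dist μ (linMoE (Gn n)) (linMoE Gstar) / lossL2r r (Gn n) Gstar
        ≤ (C * (n : ℝ) ^ (-(r + 1))) / (e0 * (n : ℝ) ^ (-r)) :=
      div_le_div₀ (by positivity) (hl2 n hn) hlow hb.1
    refine h1.trans (le_of_eq ?_)
    have hsplit : (n:ℝ) ^ (-(r+1)) = (n:ℝ) ^ (-r) * (n:ℝ)⁻¹ := by
      have : -(r+1) = (-r) + (-1) := by ring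
      rw [this, Real.rpow_add hnpos, Real.rpow_neg_one]
    rw [hsplit]
    have hnr : ((n:ℝ) ^ (-r)) ≠ 0 := (Real.rpow_pos_of_pos hnpos _).ne'
    field_simp
  have hrat0 : ∀ᶠ n : ℕ in atTop,
      0 ≤ l2dist μ (linMoE (Gn n)) (linMoE Gstar) / lossL2r r (Gn n) Gstar := by
    filter_upwards [hB2, eventually_ge_atTop 1] with n hb hn
    have hnpos : (0:ℝ) < (n:ℝ) := by exact_mod_cast hn
    have hlow : 0 < e0 * (n : ℝ) ^ (-r) :=
      mul_pos he0pos (Real.rpow_pos_of_pos hnpos _)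
    exact div_nonneg (Real.sqrt_nonneg _) (le_trans hlow.le hb.1)
  have htends : Tendsto (fun n : ℕ => (C / e0) * ((n : ℝ))⁻¹) atTop (nhds 0) := by
    have := tendsto_inv_atTop_nhds_zero_nat.const_mul (C / e0)
    simpa using this
  refine ⟨hA, hB, ⟨C, hCpos, hCbound⟩, ?_⟩
  exact tendsto_of_tendsto_of_tendsto_of_le_of_le' tendsto_const_nhds htends hrat0 hratio

end
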